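/- Let M ≥ 2 be an integer and let c ∈ (0,1) be a constant such that |𝑃_M| ≥ c·M/log M, where 𝑃_M is the set of primes p with ⌈M/2⌉ < p ≤ M. Let d ≥ 1 and let f : ℝ^d → ℂ be given by an absolutely convergent Fourier series f(x) = Σ_{k∈ℤ^d} ĉ(k)·exp(2πi k·x) whose coefficients satisfy ‖f‖ := Σ_{k∈ℤ^d} |ĉ(k)|·max(1, log|k|_∞) < ∞. Then the QMC rule based on the composite Korobov point set U_{M,d}^comp satisfies |ĉ(0) − (1/N_U) Σ_{p∈𝑃_M} Σ_{a=0}^{p−1} Σ_{n=0}^{p−1} f(x_{a,n}^{(p)})| ≤ (8d/(c·M))·‖f‖, where N_U = Σ_{p∈𝑃_M} p^2 and x_{a,n}^{(p)} = ({an/p}, {an^2/p}, …, {an^d/p}). Consequently, since N_U ≤ M^3, the error is at most (8d/(c·N_U^{1/3}))·‖f‖. -/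

import Mathlib

open Finset Polynomial

/-- `𝑃_M`: the set of primes `p` with `⌈M/2⌉ < p ≤ M` (note `⌈M/2⌉ = (M+1)/2` in `ℕ`). -/
def primesInDyadic (M : ℕ) : Finset ℕ :=
  (Finset.range (M + 1)).filter fun p => Nat.Prime p ∧ (M + 1) / 2 < p

lemma charSum (p : ℕ) (hp : 0 < p) (t : ℤ) :
    ∑ a ∈ Finset.range p, Complex.exp (2 * Real.pi * Complex.I * (a * t / p))
      = if (p : ℤ) ∣ t then (p : ℂ) else 0 := by
  have hpC : (p : ℂ) ≠ 0 := Nat.cast_ne_zero.mpr hp.ne'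
  set ζ : ℂ := Complex.exp (2 * Real.pi * Complex.I * (t / p)) with hζ
  have hterm : ∀ a : ℕ, Complex.exp (2 * Real.pi * Complex.I * ((a : ℂ) * t / p)) = ζ ^ a := by
    intro a
    rw [hζ, ← Complex.exp_nat_mul]
    congr 1
    ring
  simp only [hterm]
  by_cases hdvd : (p : ℤ) ∣ t
  · rw [if_pos hdvd]
    obtain ⟨m, hm⟩ := hdvd
    have hz1 : ζ = 1 := by
      have h0 : (t : ℂ) / p = (m : ℂ) := by
        rw [hm]; push_cast; field_simp
      rw [hζ, h0, show 2 * (Real.pi : ℂ) * Complex.I * (m : ℂ)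
          = (m : ℤ) * (2 * Real.pi * Complex.I) by push_cast; ring,
        Complex.exp_int_mul_two_pi_mul_I]
    simp [hz1]
  · have hzp : ζ ^ p = 1 := by
      rw [hζ, ← Complex.exp_nat_mul, show (p : ℂ) * (2 * Real.pi * Complex.I * (t / p))
          = (t : ℤ) * (2 * Real.pi * Complex.I) by push_cast; field_simp,
        Complex.exp_int_mul_two_pi_mul_I]
    have hzne : ζ ≠ 1 := by
      intro h
      rw [hζ, Complex.exp_eq_one_iff] at h
      obtain ⟨n, hn⟩ := h
      have h2 : (2 : ℂ) * Real.pi * Complex.I ≠ 0 := by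
        simp [Real.pi_ne_zero, Complex.I_ne_zero]
      have ht : (t : ℂ) = n * p := by
        field_simp at hn
        have h3 : (2:ℂ) * Real.pi * Complex.I * (t:ℂ) = 2 * Real.pi * Complex.I * (n * p) := by
          linear_combination (2 * Real.pi * Complex.I) * hn
        exact mul_left_cancel₀ h2 h3
      apply hdvd
      refine ⟨n, ?_⟩
      have h4 : (t:ℂ) = (p:ℂ) * n := by rw [ht]; ring
      exact_mod_cast h4
    rw [geom_sum_eq hzne, hzp]
    simp [hdvd]

lemma rootCount (p : ℕ) (hp : p.Prime) {d : ℕ} (k : Fin d → ℤ) (j0 : Fin d)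
    (hj0 : ¬ (p : ℤ) ∣ k j0) :
    ((Finset.range p).filter
        (fun n : ℕ => (p : ℤ) ∣ ∑ j : Fin d, k j * (n : ℤ) ^ ((j : ℕ) + 1))).card ≤ d := by
  haveI : Fact p.Prime := ⟨hp⟩
  set φ : Polynomial (ZMod p) :=
    ∑ j : Fin d, Polynomial.C ((k j : ZMod p)) * Polynomial.X ^ ((j : ℕ) + 1) with hφ
  have hcoeff : φ.coeff ((j0 : ℕ) + 1) = ((k j0 : ZMod p)) := by
    rw [hφ, Polynomial.finset_sum_coeff]
    rw [Finset.sum_eq_single j0]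
    · simp
    · intro j _ hne
      simp only [Polynomial.coeff_C_mul, Polynomial.coeff_X_pow]
      rw [if_neg, mul_zero]
      simp only [add_left_inj]
      exact fun h => hne (Fin.val_injective (h.symm))
    · simp
  have hkz : ((k j0 : ZMod p)) ≠ 0 := by
    rw [Ne, ZMod.intCast_zmod_eq_zero_iff_dvd]
    exact hj0
  have hφne : φ ≠ 0 := fun h => hkz (by rw [← hcoeff, h, Polynomial.coeff_zero])
  have hdeg : φ.natDegree ≤ d := by
    apply Polynomial.natDegree_sum_le_of_forall_le
    intro j _
    calc (Polynomial.C ((k j : ZMod p)) * Polynomial.X ^ ((j : ℕ) + 1)).natDegree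
        ≤ (Polynomial.X ^ ((j : ℕ) + 1) : Polynomial (ZMod p)).natDegree :=
          Polynomial.natDegree_C_mul_le _ _
      _ ≤ d := by rw [Polynomial.natDegree_X_pow]; omega
  calc ((Finset.range p).filter
        (fun n : ℕ => (p : ℤ) ∣ ∑ j : Fin d, k j * (n : ℤ) ^ ((j : ℕ) + 1))).card
      ≤ φ.roots.toFinset.card := by
        refine Finset.card_le_card_of_injOn (fun n => ((n : ℕ) : ZMod p)) ?_ ?_
        · intro n hn
          simp only [Finset.coe_filter, Set.mem_setOf_eq, Finset.mem_range] at hn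
          rw [Finset.mem_coe, Multiset.mem_toFinset, Polynomial.mem_roots hφne]
          have : ((∑ j : Fin d, k j * (n : ℤ) ^ ((j : ℕ) + 1) : ℤ) : ZMod p) = 0 := by
            rw [ZMod.intCast_zmod_eq_zero_iff_dvd]; exact hn.2
          unfold Polynomial.IsRoot
          rw [hφ]
          rw [Polynomial.eval_finset_sum]
          simp only [Polynomial.eval_mul, Polynomial.eval_C, Polynomial.eval_pow,
            Polynomial.eval_X]
          rw [← this]
          push_cast
          ring
        · intro n₁ h1 n₂ h2 he
          simp only [Finset.coe_filter, Set.mem_setOf_eq, Finset.mem_range] at h1 h2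
          have := congrArg ZMod.val he
          rwa [ZMod.val_cast_of_lt h1.1, ZMod.val_cast_of_lt h2.1] at this
    _ ≤ Multiset.card φ.roots := Multiset.toFinset_card_le _
    _ ≤ φ.natDegree := Polynomial.card_roots' φ
    _ ≤ d := hdeg

lemma korobovSum (p : ℕ) (hp : 0 < p) {d : ℕ} (k : Fin d → ℤ) :
    ∑ a ∈ Finset.range p, ∑ n ∈ Finset.range p,
        Complex.exp (2 * Real.pi * Complex.I *
          ∑ j : Fin d, (k j : ℂ) * ((Int.fract ((a : ℝ) * (n : ℝ) ^ ((j : ℕ) + 1) / p) : ℝ) : ℂ))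
      = (p : ℂ) * (((Finset.range p).filter
          (fun n : ℕ => (p : ℤ) ∣ ∑ j : Fin d, k j * (n : ℤ) ^ ((j : ℕ) + 1))).card : ℂ) := by
  have hpR : (p : ℝ) ≠ 0 := Nat.cast_ne_zero.mpr hp.ne'
  rw [Finset.sum_comm]
  have hinner : ∀ n ∈ Finset.range p, ∑ a ∈ Finset.range p,
      Complex.exp (2 * Real.pi * Complex.I *
        ∑ j : Fin d, (k j : ℂ) * ((Int.fract ((a : ℝ) * (n : ℝ) ^ ((j : ℕ) + 1) / p) : ℝ) : ℂ))
      = if (p : ℤ) ∣ ∑ j : Fin d, k j * (n : ℤ) ^ ((j : ℕ) + 1) then (p : ℂ) else 0 := by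
    intro n _
    rw [← charSum p hp (∑ j : Fin d, k j * (n : ℤ) ^ ((j : ℕ) + 1))]
    apply Finset.sum_congr rfl
    intro a _
    -- the exponents differ by an integer multiple of 2πi
    set m : ℤ := ∑ j : Fin d, k j * ⌊(a : ℝ) * (n : ℝ) ^ ((j : ℕ) + 1) / p⌋ with hm
    have hsplit : (∑ j : Fin d, (k j : ℂ) *
          ((Int.fract ((a : ℝ) * (n : ℝ) ^ ((j : ℕ) + 1) / p) : ℝ) : ℂ))
        = (a : ℂ) * ((∑ j : Fin d, k j * (n : ℤ) ^ ((j : ℕ) + 1) : ℤ) : ℂ) / p - (m : ℂ) := by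
      have : ∀ j : Fin d, (Int.fract ((a : ℝ) * (n : ℝ) ^ ((j : ℕ) + 1) / p) : ℝ)
          = (a : ℝ) * (n : ℝ) ^ ((j : ℕ) + 1) / p - (⌊(a : ℝ) * (n : ℝ) ^ ((j : ℕ) + 1) / p⌋ : ℝ) :=
        fun j => (Int.self_sub_floor _).symm
      simp only [this]
      rw [hm]
      push_cast
      rw [Finset.mul_sum, Finset.sum_div, ← Finset.sum_sub_distrib]
      apply Finset.sum_congr rfl
      intro j _
      ring
    rw [hsplit]
    rw [mul_sub, Complex.exp_sub]
    rw [show (2 : ℂ) * Real.pi * Complex.I * (m : ℂ) = (m : ℤ) * (2 * Real.pi * Complex.I) by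
      push_cast; ring, Complex.exp_int_mul_two_pi_mul_I, div_one]
  rw [Finset.sum_congr rfl hinner]
  rw [← Finset.sum_filter]
  rw [Finset.sum_const]
  simp [mul_comm]

lemma mem_primesInDyadic {M p : ℕ} (h : p ∈ primesInDyadic M) :
    p.Prime ∧ p ≤ M ∧ M < 2 * p ∧ (M + 1) / 2 < p := by
  simp only [primesInDyadic, Finset.mem_filter, Finset.mem_range] at h
  exact ⟨h.2.1, by omega, by omega, h.2.2⟩

lemma keyBound (M : ℕ) (hM : 2 ≤ M) (c : ℝ) (hc0 : 0 < c) (hc1 : c < 1)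
    (hcard : c * M / Real.log M ≤ ((primesInDyadic M).card : ℝ))
    (d : ℕ) (hd : 1 ≤ d) (k : Fin d → ℤ) (j0 : Fin d) (hj0 : k j0 ≠ 0) :
    ∑ p ∈ primesInDyadic M, (if ∀ j, (p : ℤ) ∣ k j then (p : ℝ) ^ 2 else (d : ℝ) * p)
      ≤ (∑ p ∈ primesInDyadic M, (p : ℝ) ^ 2) *
        (8 * d / (c * M) *
          max 1 (Real.log ((Finset.univ.sup fun j : Fin d => (k j).natAbs : ℕ) : ℝ))) := by
  set P := primesInDyadic M with hP
  set K : ℕ := Finset.univ.sup fun j : Fin d => (k j).natAbs with hK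
  set L : ℝ := max 1 (Real.log K) with hL
  have hL1 : (1 : ℝ) ≤ L := le_max_left _ _
  have hL0 : (0 : ℝ) ≤ L := by linarith
  have hMR : (2 : ℝ) ≤ (M : ℝ) := by exact_mod_cast hM
  have hM0 : (0 : ℝ) < M := by linarith
  have hlog : 0 < Real.log M := Real.log_pos (by exact_mod_cast hM)
  set N : ℝ := ∑ p ∈ P, (p : ℝ) ^ 2 with hN
  have hN0 : 0 ≤ N := Finset.sum_nonneg fun p _ => by positivity
  set P₂ := P.filter (fun p : ℕ => ∀ j, (p : ℤ) ∣ k j) with hP₂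
  set P₁ := P.filter (fun p : ℕ => ¬ ∀ j, (p : ℤ) ∣ k j) with hP₁
  set S : ℝ := ∑ p ∈ P, (p : ℝ) with hS
  set SP₂ : ℝ := ∑ p ∈ P₂, (p : ℝ) with hSP₂
  set LL : ℝ := ∑ p ∈ P₂, Real.log p with hLL
  set T2 : ℝ := ∑ p ∈ P₂, (p : ℝ) ^ 2 with hT2
  set T1 : ℝ := ∑ p ∈ P₁, (d : ℝ) * p with hT1
  have hsplit : ∑ p ∈ P, (if ∀ j, (p : ℤ) ∣ k j then (p : ℝ) ^ 2 else (d : ℝ) * p)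
      = T2 + T1 := by rw [hT2, hT1, hP₂, hP₁]; exact Finset.sum_ite _ _
  -- F1
  have F1 : T1 ≤ (d : ℝ) * S := by
    rw [hT1, hS, ← Finset.mul_sum]
    apply mul_le_mul_of_nonneg_left _ (by positivity)
    refine Finset.sum_le_sum_of_subset_of_nonneg ?_ (fun p _ _ => by positivity)
    rw [hP₁]; exact Finset.filter_subset _ _
  -- F2
  have F2 : (M : ℝ) * S ≤ 2 * N := by
    rw [hS, hN, Finset.mul_sum, Finset.mul_sum]
    apply Finset.sum_le_sum
    intro p hp
    obtain ⟨hpp, hpM, hp2, hp2'⟩ := mem_primesInDyadic hp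
    have : (M : ℝ) ≤ 2 * p := by exact_mod_cast hp2.le
    nlinarith [hpp.pos, (by exact_mod_cast hpp.pos : (0:ℝ) < p)]
  -- F3a
  have F3a : T2 ≤ (M : ℝ) * SP₂ := by
    rw [hT2, hSP₂, Finset.mul_sum]
    apply Finset.sum_le_sum
    intro p hp
    rw [hP₂] at hp
    obtain ⟨hpp, hpM, _, _⟩ := mem_primesInDyadic (Finset.mem_of_mem_filter _ hp)
    have h1 : (p : ℝ) ≤ M := by exact_mod_cast hpM
    have h2 : (0 : ℝ) ≤ p := by positivity
    nlinarith
  -- F3b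
  have F3b : SP₂ * Real.log M ≤ (M : ℝ) * LL := by
    rw [hSP₂, hLL, Finset.sum_mul, Finset.mul_sum]
    apply Finset.sum_le_sum
    intro p hp
    rw [hP₂] at hp
    obtain ⟨hpp, hpM, hp2, hp2'⟩ := mem_primesInDyadic (Finset.mem_of_mem_filter _ hp)
    by_cases hpe : p = M
    · subst hpe; ring_nf; exact le_refl _
    · have hp3 : 3 ≤ p := by
        have := hpp.two_le
        rcases Nat.lt_or_ge p 3 with h | h
        · interval_cases p <;> omega
        · exact h
      have he3 : Real.exp 1 ≤ 3 := by
        have := Real.exp_one_lt_d9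
        linarith
      have hep : Real.exp 1 ≤ (p : ℝ) := le_trans he3 (by exact_mod_cast hp3)
      have heM : Real.exp 1 ≤ (M : ℝ) := le_trans hep (by exact_mod_cast hpM)
      have := Real.log_div_self_antitoneOn (by exact hep : (p:ℝ) ∈ {x | Real.exp 1 ≤ x})
        (by exact heM : (M:ℝ) ∈ {x | Real.exp 1 ≤ x}) (by exact_mod_cast hpM)
      have hp0 : (0 : ℝ) < p := by exact_mod_cast hpp.pos
      rw [div_le_div_iff₀ hM0 hp0] at this
      linarith
  -- F3c
  have F3c : LL ≤ L := by
    by_cases hP₂e : P₂ = ∅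
    · rw [hLL, hP₂e]; simpa using hL0
    · have hn0 : 0 < (k j0).natAbs := Int.natAbs_pos.mpr hj0
      have hdvd : (∏ p ∈ P₂, p : ℕ) ∣ (k j0).natAbs := by
        apply Finset.prod_primes_dvd
        · intro p hp
          rw [hP₂] at hp
          exact (mem_primesInDyadic (Finset.mem_of_mem_filter _ hp)).1.prime
        · intro p hp
          rw [hP₂] at hp
          have h := (Finset.mem_filter.mp hp).2 j0
          have := Int.natAbs_dvd_natAbs.mpr h
          simpa using this
      have hprodle : (∏ p ∈ P₂, p : ℕ) ≤ (k j0).natAbs := Nat.le_of_dvd hn0 hdvd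
      have hprodpos : 0 < (∏ p ∈ P₂, p : ℕ) := by
        apply Finset.prod_pos
        intro p hp
        rw [hP₂] at hp
        exact (mem_primesInDyadic (Finset.mem_of_mem_filter _ hp)).1.pos
      have hKn : ((k j0).natAbs : ℝ) ≤ (K : ℝ) := by
        exact_mod_cast Finset.le_sup (f := fun j : Fin d => (k j).natAbs) (Finset.mem_univ j0)
      have hlogprod : LL = Real.log ((∏ p ∈ P₂, p : ℕ) : ℝ) := by
        rw [hLL, Nat.cast_prod, Real.log_prod]
        intro p hp
        rw [hP₂] at hp
        exact_mod_cast (mem_primesInDyadic (Finset.mem_of_mem_filter _ hp)).1.pos.ne'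
      rw [hlogprod]
      calc Real.log ((∏ p ∈ P₂, p : ℕ) : ℝ) ≤ Real.log K := by
            apply Real.log_le_log (by exact_mod_cast hprodpos)
            exact le_trans (by exact_mod_cast hprodle) hKn
        _ ≤ L := le_max_right _ _
  -- F4
  have F4 : c * ((M:ℝ) * M * M) ≤ 4 * (Real.log M * N) := by
    have hcardN : (P.card : ℝ) * ((M : ℝ)/2)^2 ≤ N := by
      rw [hN]
      have := Finset.card_nsmul_le_sum P (fun p => (p:ℝ)^2) (((M:ℝ)/2)^2) ?_
      · simpa [nsmul_eq_mul] using this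
      · intro p hp
        obtain ⟨hpp, _, hp2, _⟩ := mem_primesInDyadic hp
        have : (M : ℝ) < 2 * p := by exact_mod_cast hp2
        have hp0 : (0:ℝ) ≤ p := by positivity
        nlinarith
    have h4 : c * M / Real.log M * (((M:ℝ)/2)^2) ≤ N := by
      calc c * M / Real.log M * (((M:ℝ)/2)^2)
          ≤ (P.card : ℝ) * (((M:ℝ)/2)^2) :=
            mul_le_mul_of_nonneg_right hcard (by positivity)
        _ ≤ N := hcardN
    have heq : c * ((M:ℝ) * M * M) = (c * M / Real.log M * (((M:ℝ)/2)^2)) * (4 * Real.log M) := by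
      field_simp
      ring
    rw [heq]
    calc (c * M / Real.log M * (((M:ℝ)/2)^2)) * (4 * Real.log M)
        ≤ N * (4 * Real.log M) := mul_le_mul_of_nonneg_right h4 (by positivity)
      _ = 4 * (Real.log M * N) := by ring
  -- combine
  have h1 : T1 * (c * M) ≤ 2 * d * N * L := by
    have ha : T1 * (c * M) ≤ ((d:ℝ) * S) * (c * M) :=
      mul_le_mul_of_nonneg_right F1 (by positivity)
    have hb : ((d:ℝ) * S) * (c * M) = (c * d) * ((M:ℝ) * S) := by ring
    have hc' : (c * d) * ((M:ℝ) * S) ≤ (c * d) * (2 * N) :=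
      mul_le_mul_of_nonneg_left F2 (by positivity)
    have hd' : (c * d) * (2 * N) ≤ 2 * d * N * L := by
      have hstep : (c * d) * (2 * N) ≤ (1 * d) * (2 * N) := by
        apply mul_le_mul_of_nonneg_right _ (mul_nonneg zero_le_two hN0)
        apply mul_le_mul_of_nonneg_right hc1.le (by positivity)
      calc (c * d) * (2 * N) ≤ (1 * d) * (2 * N) := hstep
        _ = (2 * d * N) * 1 := by ring
        _ ≤ (2 * d * N) * L := mul_le_mul_of_nonneg_left hL1
            (mul_nonneg (mul_nonneg (by positivity) (by positivity)) hN0)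
        _ = 2 * d * N * L := by ring
    calc T1 * (c * M) ≤ ((d:ℝ) * S) * (c * M) := ha
      _ = (c * d) * ((M:ℝ) * S) := by ring
      _ ≤ (c * d) * (2 * N) := hc'
      _ ≤ 2 * d * N * L := hd'
  have h2 : T2 * (c * M) ≤ 4 * N * L := by
    have F3 : T2 * Real.log M ≤ (M:ℝ) * M * L := by
      calc T2 * Real.log M ≤ ((M:ℝ) * SP₂) * Real.log M :=
            mul_le_mul_of_nonneg_right F3a hlog.le
        _ = (M:ℝ) * (SP₂ * Real.log M) := by ring
        _ ≤ (M:ℝ) * ((M:ℝ) * LL) := mul_le_mul_of_nonneg_left F3b hM0.le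
        _ ≤ (M:ℝ) * ((M:ℝ) * L) := by
            apply mul_le_mul_of_nonneg_left _ hM0.le
            exact mul_le_mul_of_nonneg_left F3c hM0.le
        _ = (M:ℝ) * M * L := by ring
    have h2a : (T2 * (c * M)) * Real.log M ≤ (4 * N * L) * Real.log M := by
      calc (T2 * (c * M)) * Real.log M = (T2 * Real.log M) * (c * M) := by ring
        _ ≤ ((M:ℝ) * M * L) * (c * M) := mul_le_mul_of_nonneg_right F3 (by positivity)
        _ = L * (c * ((M:ℝ) * M * M)) := by ring
        _ ≤ L * (4 * (Real.log M * N)) := mul_le_mul_of_nonneg_left F4 hL0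
        _ = (4 * N * L) * Real.log M := by ring
    exact le_of_mul_le_mul_right h2a hlog
  have hfinal : (T2 + T1) * (c * M) ≤ N * (8 * d * L) := by
    have h6 : (4 : ℝ) * (N * L) ≤ 6 * d * (N * L) := by
      apply mul_le_mul_of_nonneg_right _ (mul_nonneg hN0 hL0)
      have : (1:ℝ) ≤ d := by exact_mod_cast hd
      linarith
    linarith [h1, h2, h6]
  rw [hsplit]
  have heq2 : N * (8 * (d:ℝ) / (c * M) * L) = N * (8 * d * L) / (c * M) := by ring
  rw [heq2]
  exact (le_div_iff₀ (by positivity : (0:ℝ) < c * M)).mpr hfinal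

/-- Let `M ≥ 2`, `c ∈ (0,1)` with `|𝑃_M| ≥ c·M/log M`, `d ≥ 1`, and let
`f` be given by an absolutely convergent Fourier series with coefficients `coef` whose
weighted norm `‖f‖ = ∑_{k∈ℤᵈ} |coef k| max(1, log|k|_∞)` is finite. Then the QMC rule
based on the composite Korobov point set `U_{M,d}^comp` satisfies
`|coef 0 − (1/N_U) ∑_{p∈𝑃_M} ∑_{a=0}^{p-1} ∑_{n=0}^{p-1} f(x_{a,n}⁽ᵖ⁾)| ≤ (8d/(cM))·‖f‖`,
and consequently (since `N_U ≤ M³`) the error is at most `(8d/(c·N_U^{1/3}))·‖f‖`. -/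
theorem composite_korobov_U_worst_case_error (M : ℕ) (hM : 2 ≤ M)
    (c : ℝ) (hc0 : 0 < c) (hc1 : c < 1)
    (hcard : c * M / Real.log M ≤ ((primesInDyadic M).card : ℝ))
    (d : ℕ) (hd : 1 ≤ d)
    (f : (Fin d → ℝ) → ℂ) (coef : (Fin d → ℤ) → ℂ)
    (hnorm : Summable fun k : Fin d → ℤ =>
      ‖coef k‖ *
        max 1 (Real.log ((Finset.univ.sup fun j : Fin d => (k j).natAbs : ℕ) : ℝ)))
    (hf : ∀ x : Fin d → ℝ, f x = ∑' k : Fin d → ℤ,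
      coef k * Complex.exp (2 * Real.pi * Complex.I * ∑ j : Fin d, (k j : ℂ) * (x j : ℂ))) :
    ‖coef 0 - (1 / ((∑ p ∈ primesInDyadic M, p ^ 2 : ℕ) : ℂ)) *
        ∑ p ∈ primesInDyadic M, ∑ a ∈ Finset.range p, ∑ n ∈ Finset.range p,
          f (fun j : Fin d => Int.fract ((a : ℝ) * (n : ℝ) ^ ((j : ℕ) + 1) / p))‖ ≤
      8 * d / (c * M) *
        (∑' k : Fin d → ℤ, ‖coef k‖ *
          max 1 (Real.log ((Finset.univ.sup fun j : Fin d => (k j).natAbs : ℕ) : ℝ))) ∧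
    ‖coef 0 - (1 / ((∑ p ∈ primesInDyadic M, p ^ 2 : ℕ) : ℂ)) *
        ∑ p ∈ primesInDyadic M, ∑ a ∈ Finset.range p, ∑ n ∈ Finset.range p,
          f (fun j : Fin d => Int.fract ((a : ℝ) * (n : ℝ) ^ ((j : ℕ) + 1) / p))‖ ≤
      8 * d / (c * ((∑ p ∈ primesInDyadic M, p ^ 2 : ℕ) : ℝ) ^ ((1 : ℝ) / 3)) *
        (∑' k : Fin d → ℤ, ‖coef k‖ *
          max 1 (Real.log ((Finset.univ.sup fun j : Fin d => (k j).natAbs : ℕ) : ℝ))) := by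
  classical
  have hlog : 0 < Real.log M := Real.log_pos (by exact_mod_cast hM)
  have hM0 : (0 : ℝ) < M := by positivity
  have hPcard : (0 : ℝ) < ((primesInDyadic M).card : ℝ) :=
    lt_of_lt_of_le (by positivity) hcard
  have hPne : (primesInDyadic M).Nonempty :=
    Finset.card_pos.mp (by exact_mod_cast hPcard)
  set Nn : ℕ := ∑ p ∈ primesInDyadic M, p ^ 2 with hNn
  have hNnpos : 0 < Nn := by
    rw [hNn]
    apply Finset.sum_pos _ hPne
    intro p hp
    exact pow_pos (mem_primesInDyadic hp).1.pos 2
  have hNnC : ((Nn : ℕ) : ℂ) ≠ 0 := Nat.cast_ne_zero.mpr hNnpos.ne'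
  have hNnR : (0 : ℝ) < (Nn : ℝ) := by exact_mod_cast hNnpos
  -- summability of coefficients
  have habs : Summable fun k : Fin d → ℤ => ‖coef k‖ :=
    hnorm.of_nonneg_of_le (fun k => norm_nonneg _)
      (fun k => le_mul_of_one_le_right (norm_nonneg _) (le_max_left _ _))
  -- modulus-1 of exponentials
  have habsexp : ∀ (k : Fin d → ℤ) (x : Fin d → ℝ),
      ‖Complex.exp (2 * Real.pi * Complex.I *
        ∑ j : Fin d, (k j : ℂ) * (x j : ℂ))‖ = 1 := by
    intro k x
    have h1 : (2 * (Real.pi : ℂ) * Complex.I * ∑ j : Fin d, (k j : ℂ) * (x j : ℂ))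
        = ((2 * Real.pi * ∑ j : Fin d, (k j : ℝ) * x j : ℝ) : ℂ) * Complex.I := by
      push_cast
      ring
    rw [h1, Complex.norm_exp_ofReal_mul_I]
  -- summability of the fourier series at any point
  have hsummand : ∀ x : Fin d → ℝ, Summable (fun k : Fin d → ℤ =>
      coef k * Complex.exp (2 * Real.pi * Complex.I *
        ∑ j : Fin d, (k j : ℂ) * (x j : ℂ))) := by
    intro x
    apply Summable.of_norm
    have h1 : (fun k : Fin d → ℤ => ‖coef k * Complex.exp (2 * Real.pi * Complex.I *
        ∑ j : Fin d, (k j : ℂ) * (x j : ℂ))‖) = fun k => ‖coef k‖ := by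
      funext k
      rw [norm_mul, habsexp, mul_one]
    rw [h1]
    exact habs
  -- swap sums and tsum
  set W : (Fin d → ℤ) → ℂ := fun k => ∑ p ∈ primesInDyadic M, ∑ a ∈ Finset.range p,
    ∑ n ∈ Finset.range p, Complex.exp (2 * Real.pi * Complex.I *
      ∑ j : Fin d, (k j : ℂ) * ((Int.fract ((a : ℝ) * (n : ℝ) ^ ((j : ℕ) + 1) / p) : ℝ) : ℂ))
    with hW
  have hswap : ∑ p ∈ primesInDyadic M, ∑ a ∈ Finset.range p, ∑ n ∈ Finset.range p,
      f (fun j : Fin d => Int.fract ((a : ℝ) * (n : ℝ) ^ ((j : ℕ) + 1) / p))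
      = ∑' k : Fin d → ℤ, coef k * W k := by
    have h3 : ∀ p a : ℕ, ∑ n ∈ Finset.range p,
        f (fun j : Fin d => Int.fract ((a : ℝ) * (n : ℝ) ^ ((j : ℕ) + 1) / p))
        = ∑' k : Fin d → ℤ, ∑ n ∈ Finset.range p, coef k * Complex.exp
            (2 * Real.pi * Complex.I *
              ∑ j : Fin d, (k j : ℂ) * ((Int.fract ((a : ℝ) * (n : ℝ) ^ ((j : ℕ) + 1) / p) : ℝ) : ℂ)) := by
      intro p a
      rw [Finset.sum_congr rfl (fun n _ => hf _)]
      exact (Summable.tsum_finsetSum (fun n _ => hsummand _)).symm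
    have h2 : ∀ p : ℕ, ∑ a ∈ Finset.range p, ∑ n ∈ Finset.range p,
        f (fun j : Fin d => Int.fract ((a : ℝ) * (n : ℝ) ^ ((j : ℕ) + 1) / p))
        = ∑' k : Fin d → ℤ, ∑ a ∈ Finset.range p, ∑ n ∈ Finset.range p, coef k * Complex.exp
            (2 * Real.pi * Complex.I *
              ∑ j : Fin d, (k j : ℂ) * ((Int.fract ((a : ℝ) * (n : ℝ) ^ ((j : ℕ) + 1) / p) : ℝ) : ℂ)) := by
      intro p
      rw [Finset.sum_congr rfl (fun a _ => h3 p a)]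
      exact (Summable.tsum_finsetSum (fun a _ => summable_sum (fun n _ => hsummand _))).symm
    rw [Finset.sum_congr rfl (fun p _ => h2 p)]
    rw [← Summable.tsum_finsetSum (fun p _ => summable_sum (fun a _ => summable_sum (fun n _ => hsummand _)))]
    apply tsum_congr
    intro k
    rw [hW]
    simp_rw [← Finset.mul_sum]
  -- evaluate W via korobovSum
  set cnt : ℕ → (Fin d → ℤ) → ℕ := fun p k => ((Finset.range p).filter
      (fun n : ℕ => (p : ℤ) ∣ ∑ j : Fin d, k j * (n : ℤ) ^ ((j : ℕ) + 1))).card with hcnt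
  have hWeval : ∀ k : Fin d → ℤ, W k = ((∑ p ∈ primesInDyadic M, p * cnt p k : ℕ) : ℂ) := by
    intro k
    rw [hW, Nat.cast_sum]
    apply Finset.sum_congr rfl
    intro p hp
    rw [korobovSum p (mem_primesInDyadic hp).1.pos k, hcnt]
    push_cast
    ring
  have hcntle : ∀ p k, cnt p k ≤ p := by
    intro p k
    rw [hcnt]
    exact le_trans (Finset.card_filter_le _ _) (le_of_eq (Finset.card_range p))
  have hWnatle : ∀ k : Fin d → ℤ, (∑ p ∈ primesInDyadic M, p * cnt p k : ℕ) ≤ Nn := by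
    intro k
    rw [hNn]
    apply Finset.sum_le_sum
    intro p _
    rw [pow_two]
    exact Nat.mul_le_mul_left p (hcntle p k)
  have hWle : ∀ k : Fin d → ℤ, ‖W k‖ ≤ (Nn : ℝ) := by
    intro k
    rw [hWeval, Complex.norm_natCast]
    exact_mod_cast hWnatle k
  have hcnt0 : ∀ p : ℕ, cnt p (0 : Fin d → ℤ) = p := by
    intro p
    show ((Finset.range p).filter
      (fun n : ℕ => (p : ℤ) ∣ ∑ j : Fin d, (0 : Fin d → ℤ) j * (n : ℤ) ^ ((j : ℕ) + 1))).card = p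
    rw [Finset.filter_true_of_mem, Finset.card_range]
    intro n _
    simp
  have hW0 : W 0 = (Nn : ℂ) := by
    rw [hWeval]
    congr 1
    rw [hNn]
    apply Finset.sum_congr rfl
    intro p _
    rw [hcnt0, pow_two]
  -- the main per-k bound
  set L : (Fin d → ℤ) → ℝ := fun k =>
    max 1 (Real.log ((Finset.univ.sup fun j : Fin d => (k j).natAbs : ℕ) : ℝ)) with hL
  have hL1 : ∀ k, 1 ≤ L k := fun k => le_max_left _ _
  have hWbound : ∀ k : Fin d → ℤ, k ≠ 0 →
      ‖W k‖ ≤ (Nn : ℝ) * (8 * d / (c * M) * L k) := by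
    intro k hk
    obtain ⟨j0, hj0⟩ := Function.ne_iff.mp hk
    have hj0' : k j0 ≠ 0 := by simpa using hj0
    have h1 : ‖W k‖ = ((∑ p ∈ primesInDyadic M, p * cnt p k : ℕ) : ℝ) := by
      rw [hWeval, Complex.norm_natCast]
    rw [h1]
    have h2 : ((∑ p ∈ primesInDyadic M, p * cnt p k : ℕ) : ℝ)
        ≤ ∑ p ∈ primesInDyadic M, (if ∀ j, (p : ℤ) ∣ k j then (p : ℝ) ^ 2 else (d : ℝ) * p) := by
      rw [Nat.cast_sum]
      apply Finset.sum_le_sum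
      intro p hp
      by_cases hdvd : ∀ j, (p : ℤ) ∣ k j
      · rw [if_pos hdvd]
        have := hcntle p k
        push_cast
        nlinarith [Nat.cast_nonneg (α := ℝ) p, (by exact_mod_cast this : ((cnt p k : ℝ)) ≤ (p:ℝ))]
      · rw [if_neg hdvd]
        push_neg at hdvd
        obtain ⟨j1, hj1⟩ := hdvd
        have hcd : cnt p k ≤ d := by
          rw [hcnt]
          exact rootCount p (mem_primesInDyadic hp).1 k j1 hj1
        have hcdR : ((cnt p k : ℝ)) ≤ (d : ℝ) := by exact_mod_cast hcd
        push_cast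
        nlinarith [Nat.cast_nonneg (α := ℝ) p]
    have h3 := keyBound M hM c hc0 hc1 hcard d hd k j0 hj0'
    have h4 : (∑ p ∈ primesInDyadic M, (p : ℝ) ^ 2) = (Nn : ℝ) := by
      rw [hNn]
      push_cast
      rfl
    rw [h4] at h3
    exact le_trans h2 h3
  -- error identity
  set D : (Fin d → ℤ) → ℂ := fun k => (if k = 0 then (1:ℂ) else 0) - (1 / (Nn : ℂ)) * W k with hD
  have hs1 : Summable fun k : Fin d → ℤ => coef k * ((1 / (Nn : ℂ)) * W k) := by
    apply Summable.of_norm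
    apply Summable.of_nonneg_of_le (fun k => norm_nonneg _) _ habs
    intro k
    rw [norm_mul, norm_mul]
    have h1 : ‖1 / (Nn:ℂ)‖ = 1 / (Nn:ℝ) := by
      rw [norm_div, norm_one, Complex.norm_natCast]
    rw [h1]
    calc ‖coef k‖ * (1 / (Nn:ℝ) * ‖W k‖)
        ≤ ‖coef k‖ * (1 / (Nn:ℝ) * (Nn:ℝ)) := by
          apply mul_le_mul_of_nonneg_left _ (norm_nonneg _)
          apply mul_le_mul_of_nonneg_left (hWle k) (by positivity)
      _ = ‖coef k‖ := by field_simp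
  have hs2 : Summable fun k : Fin d → ℤ => coef k * (if k = 0 then (1:ℂ) else 0) := by
    apply summable_of_ne_finset_zero (s := {(0 : Fin d → ℤ)})
    intro k hk
    rw [if_neg (by simpa using hk), mul_zero]
  have herr' : ∑' k : Fin d → ℤ, coef k * D k
      = coef 0 - (1 / (Nn : ℂ)) * ∑' k : Fin d → ℤ, coef k * W k := by
    have h1 : ∀ k : Fin d → ℤ, coef k * D k
        = coef k * (if k = 0 then (1:ℂ) else 0) - coef k * ((1 / (Nn : ℂ)) * W k) := by
      intro k; rw [hD]; ring
    rw [tsum_congr h1, Summable.tsum_sub hs2 hs1]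
    congr 1
    · rw [show (fun k : Fin d → ℤ => coef k * (if k = 0 then (1:ℂ) else 0))
          = fun k : Fin d → ℤ => (if k = 0 then coef 0 else 0) from funext fun k => by
            split
            · simp_all
            · simp]
      exact tsum_ite_eq (0 : Fin d → ℤ) (fun _ => coef 0)
    · rw [show (fun k : Fin d → ℤ => coef k * ((1 / (Nn : ℂ)) * W k))
          = fun k : Fin d → ℤ => (1 / (Nn : ℂ)) * (coef k * W k) from funext fun k => by ring]
      exact tsum_mul_left
  -- summability of the norms
  have hDabs : ∀ k : Fin d → ℤ, ‖coef k * D k‖ = ‖coef k‖ * ‖D k‖ := by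
    intro k
    rw [norm_mul]
  have hDle2 : ∀ k : Fin d → ℤ, ‖D k‖ ≤ 2 := by
    intro k
    rw [hD]
    calc ‖(if k = 0 then (1:ℂ) else 0) - (1 / (Nn : ℂ)) * W k‖
        ≤ ‖if k = 0 then (1:ℂ) else 0‖ + ‖(1 / (Nn : ℂ)) * W k‖ :=
          norm_sub_le _ _
      _ ≤ 1 + 1 := by
          apply add_le_add
          · split <;> simp
          · rw [norm_mul, norm_div, norm_one, Complex.norm_natCast]
            calc 1 / (Nn:ℝ) * ‖W k‖ ≤ 1 / (Nn:ℝ) * (Nn:ℝ) := by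
                  apply mul_le_mul_of_nonneg_left (hWle k) (by positivity)
              _ = 1 := by field_simp
      _ = 2 := by norm_num
  have hsD : Summable fun k : Fin d → ℤ => ‖coef k * D k‖ := by
    apply Summable.of_nonneg_of_le (fun k => norm_nonneg _) _ (habs.mul_left 2)
    intro k
    rw [hDabs]
    calc ‖coef k‖ * ‖D k‖ ≤ ‖coef k‖ * 2 :=
          mul_le_mul_of_nonneg_left (hDle2 k) (norm_nonneg _)
      _ = 2 * ‖coef k‖ := by ring
  -- pointwise bound
  have hpt : ∀ k : Fin d → ℤ, ‖coef k * D k‖ ≤ 8 * d / (c * M) * (‖coef k‖ * L k) := by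
    intro k
    by_cases hk : k = 0
    · subst hk
      have hD0 : D 0 = 0 := by
        simp only [hD, hW0]
        rw [one_div, inv_mul_cancel₀ hNnC]
        norm_num
      rw [hD0, mul_zero, norm_zero]
      have hL0 : 0 ≤ L 0 := le_trans zero_le_one (hL1 0)
      positivity
    · rw [hDabs]
      have hDk : ‖D k‖ ≤ 8 * d / (c * M) * L k := by
        rw [hD]
        simp only [if_neg hk]
        rw [zero_sub, norm_neg, norm_mul, norm_div, norm_one, Complex.norm_natCast]
        calc 1 / (Nn:ℝ) * ‖W k‖
            ≤ 1 / (Nn:ℝ) * ((Nn : ℝ) * (8 * d / (c * M) * L k)) := by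
              apply mul_le_mul_of_nonneg_left (hWbound k hk) (by positivity)
          _ = 8 * d / (c * M) * L k := by field_simp
      calc ‖coef k‖ * ‖D k‖
          ≤ ‖coef k‖ * (8 * d / (c * M) * L k) :=
            mul_le_mul_of_nonneg_left hDk (norm_nonneg _)
        _ = 8 * d / (c * M) * (‖coef k‖ * L k) := by ring
  -- first bound
  have hb1 : ‖coef 0 - (1 / (Nn : ℂ)) *
      ∑ p ∈ primesInDyadic M, ∑ a ∈ Finset.range p, ∑ n ∈ Finset.range p,
        f (fun j : Fin d => Int.fract ((a : ℝ) * (n : ℝ) ^ ((j : ℕ) + 1) / p))‖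
      ≤ 8 * d / (c * M) * (∑' k : Fin d → ℤ, ‖coef k‖ * L k) := by
    rw [hswap, ← herr']
    calc ‖∑' k : Fin d → ℤ, coef k * D k‖
        = ‖∑' k : Fin d → ℤ, coef k * D k‖ := rfl
      _ ≤ ∑' k : Fin d → ℤ, ‖coef k * D k‖ := norm_tsum_le_tsum_norm hsD
      _ ≤ ∑' k : Fin d → ℤ, 8 * d / (c * M) * (‖coef k‖ * L k) :=
          Summable.tsum_le_tsum hpt hsD (hnorm.mul_left _)
      _ = 8 * d / (c * M) * (∑' k : Fin d → ℤ, ‖coef k‖ * L k) := tsum_mul_left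
  -- second bound
  have hNle : Nn ≤ M ^ 3 := by
    have hsub : primesInDyadic M ⊆ Finset.Ioc 0 M := by
      intro p hp
      exact Finset.mem_Ioc.mpr ⟨(mem_primesInDyadic hp).1.pos, (mem_primesInDyadic hp).2.1⟩
    calc Nn ≤ ∑ _p ∈ primesInDyadic M, M ^ 2 := by
          rw [hNn]
          exact Finset.sum_le_sum fun p hp => Nat.pow_le_pow_left (mem_primesInDyadic hp).2.1 2
      _ = (primesInDyadic M).card * M ^ 2 := by rw [Finset.sum_const, smul_eq_mul]
      _ ≤ M * M ^ 2 := by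
          apply Nat.mul_le_mul_right
          calc (primesInDyadic M).card ≤ (Finset.Ioc 0 M).card := Finset.card_le_card hsub
            _ = M := by rw [Nat.card_Ioc]; omega
      _ = M ^ 3 := by ring
  have hrpow : ((Nn:ℝ)) ^ ((1:ℝ)/3) ≤ (M:ℝ) := by
    have h1 : ((Nn:ℝ)) ≤ ((M:ℝ)) ^ (3:ℕ) := by exact_mod_cast hNle
    have h2 := Real.rpow_le_rpow (by positivity) h1 (by norm_num : (0:ℝ) ≤ 1/3)
    rwa [← Real.rpow_natCast (M:ℝ) 3, ← Real.rpow_mul (le_of_lt hM0),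
      show ((3:ℕ):ℝ) * (1/3) = 1 by norm_num, Real.rpow_one] at h2
  have hrpow0 : 0 < ((Nn:ℝ)) ^ ((1:ℝ)/3) := Real.rpow_pos_of_pos hNnR _
  have hfrac : 8 * (d:ℝ) / (c * M) ≤ 8 * d / (c * ((Nn:ℝ)) ^ ((1:ℝ)/3)) := by
    apply div_le_div_of_nonneg_left (by positivity) (by positivity)
    exact mul_le_mul_of_nonneg_left hrpow hc0.le
  have htn : 0 ≤ ∑' k : Fin d → ℤ, ‖coef k‖ * L k :=
    tsum_nonneg fun k => mul_nonneg (norm_nonneg _) (le_trans zero_le_one (hL1 k))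
  exact ⟨hb1, le_trans hb1 (mul_le_mul_of_nonneg_right hfrac htn)⟩
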